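/- Let X be a nonempty set, q ≥ 1, and Δ : X × X → ℝ^q an ℝ^q-valued metric (componentwise nonnegative, Δ(x,y) = 0 iff x = y, componentwise triangle inequality, symmetric) such that every Δ-Cauchy sequence Δ-converges (Δ is complete). Let T : X → X satisfy Δ(Tx,Ty) ≤ A·Δ(x,y) componentwise for all x,y ∈ X, where A is a normal q×q matrix with nonnegative entries. Then T has a unique fixed point z ∈ X, and for every x ∈ X the orbit (Tⁿx)ₙ Δ-converges to z (Perov's theorem, obtained from the ordered version by taking the trivial quasi-order). -/

import Mathlib

open Filter Topology Matrix

/-- Perov's theorem: for a complete `ℝ^q`-valued metric `Δ` and a map `T` which is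
`A`-contractive for a normal nonnegative matrix `A`, `T` has a unique fixed point `z`
and every orbit `Δ`-converges to `z`. -/
theorem stmt15 {X : Type*} [Nonempty X] (q : ℕ) (hq : 1 ≤ q)
    (Δ : X → X → (Fin q → ℝ))
    (hpos : ∀ x y i, 0 ≤ Δ x y i)
    (hreflsuf : ∀ x y, Δ x y = 0 ↔ x = y)
    (htri : ∀ x y z i, Δ x z i ≤ Δ x y i + Δ y z i)
    (hsym : ∀ x y, Δ x y = Δ y x)
    (hcomplete : ∀ u : ℕ → X,
      Tendsto (fun p : ℕ × ℕ => Δ (u p.1) (u p.2)) atTop (𝓝 0) →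
      ∃ x, Tendsto (fun n => Δ (u n) x) atTop (𝓝 0))
    (T : X → X)
    (A : Matrix (Fin q) (Fin q) ℝ) (hA : ∀ i j, 0 ≤ A i j)
    (hnormal : ∃ z : Fin q → ℝ, (∀ i, 0 < z i) ∧ ∀ i, A.mulVec z i < z i)
    (hcontr : ∀ x y : X, ∀ i, Δ (T x) (T y) i ≤ A.mulVec (Δ x y) i) :
    ∃ z : X, T z = z ∧ (∀ w : X, T w = w → w = z) ∧
      ∀ x : X, Tendsto (fun n => Δ (T^[n] x) z) atTop (𝓝 0) := by
  obtain ⟨z0, hz0, hAz0⟩ := hnormal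
  haveI : Nonempty (Fin q) := ⟨⟨0, hq⟩⟩
  set d : X → X → ℝ := fun x y =>
    Finset.univ.sup' Finset.univ_nonempty (fun i => Δ x y i / z0 i) with hd
  have hle_d : ∀ x y i, Δ x y i ≤ d x y * z0 i := by
    intro x y i
    have h1 : Δ x y i / z0 i ≤ d x y :=
      Finset.le_sup' (fun i => Δ x y i / z0 i) (Finset.mem_univ i)
    calc Δ x y i = (Δ x y i / z0 i) * z0 i := (div_mul_cancel₀ _ (hz0 i).ne').symm
      _ ≤ d x y * z0 i := mul_le_mul_of_nonneg_right h1 (hz0 i).le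
  have hd_le : ∀ x y c, (∀ i, Δ x y i ≤ c * z0 i) → d x y ≤ c := by
    intro x y c h
    apply Finset.sup'_le
    intro i _
    rw [div_le_iff₀ (hz0 i)]
    exact h i
  have hd0 : ∀ x y, 0 ≤ d x y := by
    intro x y
    have h1 := Finset.le_sup' (fun i => Δ x y i / z0 i) (Finset.mem_univ (⟨0, hq⟩ : Fin q))
    exact le_trans (div_nonneg (hpos x y (⟨0, hq⟩ : Fin q)) (hz0 _).le) h1
  have hdsym : ∀ x y, d x y = d y x := by intro x y; simp only [hd, hsym x y]
  have hdself : ∀ x, d x x = 0 := by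
    intro x
    refine le_antisymm (hd_le x x 0 fun i => ?_) (hd0 x x)
    have : Δ x x = 0 := (hreflsuf x x).2 rfl
    simp [this]
  have hdtri : ∀ x y w, d x w ≤ d x y + d y w := by
    intro x y w
    apply hd_le
    intro i
    calc Δ x w i ≤ Δ x y i + Δ y w i := htri x y w i
      _ ≤ d x y * z0 i + d y w * z0 i := add_le_add (hle_d x y i) (hle_d y w i)
      _ = (d x y + d y w) * z0 i := (add_mul _ _ _).symm
  set r : ℝ := Finset.univ.sup' Finset.univ_nonempty (fun i => A.mulVec z0 i / z0 i)
    with hrdef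
  have hmv0 : ∀ i, 0 ≤ A.mulVec z0 i := by
    intro i
    show 0 ≤ ∑ j, A i j * z0 j
    apply Finset.sum_nonneg
    intro j _
    exact mul_nonneg (hA i j) (hz0 j).le
  have hr1 : r < 1 := by
    rw [hrdef, Finset.sup'_lt_iff]
    intro i _
    rw [div_lt_one (hz0 i)]
    exact hAz0 i
  have hr0 : 0 ≤ r := by
    have h1 := Finset.le_sup' (fun i => A.mulVec z0 i / z0 i) (Finset.mem_univ (⟨0, hq⟩ : Fin q))
    exact le_trans (div_nonneg (hmv0 (⟨0, hq⟩ : Fin q)) (hz0 _).le) h1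
  have hAzr : ∀ i, A.mulVec z0 i ≤ r * z0 i := by
    intro i
    have h1 : A.mulVec z0 i / z0 i ≤ r :=
      Finset.le_sup' (fun i => A.mulVec z0 i / z0 i) (Finset.mem_univ i)
    calc A.mulVec z0 i = (A.mulVec z0 i / z0 i) * z0 i := (div_mul_cancel₀ _ (hz0 i).ne').symm
      _ ≤ r * z0 i := mul_le_mul_of_nonneg_right h1 (hz0 i).le
  have hdT : ∀ x y, d (T x) (T y) ≤ r * d x y := by
    intro x y
    apply hd_le
    intro i
    calc Δ (T x) (T y) i ≤ A.mulVec (Δ x y) i := hcontr x y i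
      _ = ∑ j, A i j * Δ x y j := rfl
      _ ≤ ∑ j, A i j * (d x y * z0 j) :=
          Finset.sum_le_sum fun j _ => mul_le_mul_of_nonneg_left (hle_d x y j) (hA i j)
      _ = d x y * A.mulVec z0 i := by
          simp only [Matrix.mulVec, dotProduct, Finset.mul_sum]; congr 1; ext j; ring
      _ ≤ d x y * (r * z0 i) := mul_le_mul_of_nonneg_left (hAzr i) (hd0 x y)
      _ = r * d x y * z0 i := by ring
  have hiter : ∀ x y n, d (T^[n] x) (T^[n] y) ≤ r ^ n * d x y := by
    intro x y n
    induction n with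
    | zero => simp
    | succ n ih =>
      calc d (T^[n+1] x) (T^[n+1] y) = d (T (T^[n] x)) (T (T^[n] y)) := by
            rw [Function.iterate_succ_apply', Function.iterate_succ_apply']
        _ ≤ r * d (T^[n] x) (T^[n] y) := hdT _ _
        _ ≤ r * (r ^ n * d x y) := mul_le_mul_of_nonneg_left ih hr0
        _ = r ^ (n+1) * d x y := by ring
  have hgeom : ∀ n : ℕ, ∑ j ∈ Finset.range n, r ^ j ≤ (1 - r)⁻¹ := by
    intro n
    rw [geom_sum_eq (ne_of_lt hr1)]
    have h1 : (0:ℝ) < 1 - r := by linarith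
    have h2 : (r ^ n - 1) / (r - 1) = (1 - r ^ n) / (1 - r) := by
      rw [div_eq_div_iff (by linarith) (by linarith)]; ring
    rw [h2, ← one_div]
    gcongr
    nlinarith [pow_nonneg hr0 n]
  have hchain : ∀ x n k,
      d (T^[n] x) (T^[n+k] x) ≤ (∑ j ∈ Finset.range k, r ^ (n + j)) * d x (T x) := by
    intro x n k
    induction k with
    | zero => simp [hdself]
    | succ k ih =>
      have hstep : d (T^[n+k] x) (T^[n+k+1] x) ≤ r ^ (n+k) * d x (T x) := by
        have := hiter x (T x) (n+k)
        rwa [← Function.iterate_succ_apply] at this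
      calc d (T^[n] x) (T^[n+(k+1)] x)
          ≤ d (T^[n] x) (T^[n+k] x) + d (T^[n+k] x) (T^[n+k+1] x) := by
            have := hdtri (T^[n] x) (T^[n+k] x) (T^[n+(k+1)] x)
            simpa [← add_assoc] using this
        _ ≤ (∑ j ∈ Finset.range k, r ^ (n + j)) * d x (T x) + r ^ (n+k) * d x (T x) :=
            add_le_add ih hstep
        _ = (∑ j ∈ Finset.range (k+1), r ^ (n + j)) * d x (T x) := by
            rw [Finset.sum_range_succ, add_mul]
  have hbound' : ∀ x n m, n ≤ m →
      d (T^[n] x) (T^[m] x) ≤ r ^ n * ((1 - r)⁻¹ * d x (T x)) := by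
    intro x n m hnm
    obtain ⟨k, rfl⟩ := Nat.exists_eq_add_of_le hnm
    calc d (T^[n] x) (T^[n+k] x) ≤ (∑ j ∈ Finset.range k, r ^ (n + j)) * d x (T x) :=
          hchain x n k
      _ = (r ^ n * ∑ j ∈ Finset.range k, r ^ j) * d x (T x) := by
          rw [Finset.mul_sum]; congr 1; apply Finset.sum_congr rfl; intro j _; rw [pow_add]
      _ ≤ (r ^ n * (1 - r)⁻¹) * d x (T x) := by
          apply mul_le_mul_of_nonneg_right _ (hd0 _ _)
          exact mul_le_mul_of_nonneg_left (hgeom k) (pow_nonneg hr0 n)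
      _ = r ^ n * ((1 - r)⁻¹ * d x (T x)) := by ring
  have hbound : ∀ x n m,
      d (T^[n] x) (T^[m] x) ≤ r ^ (min n m) * ((1 - r)⁻¹ * d x (T x)) := by
    intro x n m
    rcases le_total n m with h | h
    · rw [min_eq_left h]; exact hbound' x n m h
    · rw [min_eq_right h, hdsym]; exact hbound' x m n h
  -- construct the fixed point
  set x0 : X := Classical.arbitrary X with hx0
  set u : ℕ → X := fun n => T^[n] x0 with hu
  have hmin : Tendsto (fun p : ℕ × ℕ => min p.1 p.2) atTop atTop := by
    apply Filter.tendsto_atTop_atTop.2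
    intro b
    exact ⟨(b, b), fun p hp => le_min hp.1 hp.2⟩
  have hrpow : Tendsto (fun n : ℕ => r ^ n) atTop (𝓝 0) :=
    tendsto_pow_atTop_nhds_zero_of_lt_one hr0 hr1
  have hcauchy : Tendsto (fun p : ℕ × ℕ => Δ (u p.1) (u p.2)) atTop (𝓝 0) := by
    rw [tendsto_pi_nhds]
    intro i
    simp only [Pi.zero_apply]
    apply squeeze_zero (fun p => hpos _ _ i)
      (g := fun p : ℕ × ℕ => r ^ (min p.1 p.2) * ((1 - r)⁻¹ * d x0 (T x0) * z0 i))
    · intro p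
      calc Δ (u p.1) (u p.2) i ≤ d (u p.1) (u p.2) * z0 i := hle_d _ _ i
        _ ≤ (r ^ (min p.1 p.2) * ((1 - r)⁻¹ * d x0 (T x0))) * z0 i :=
            mul_le_mul_of_nonneg_right (hbound x0 p.1 p.2) (hz0 i).le
        _ = r ^ (min p.1 p.2) * ((1 - r)⁻¹ * d x0 (T x0) * z0 i) := by ring
    · have := (hrpow.comp hmin).mul_const ((1 - r)⁻¹ * d x0 (T x0) * z0 i)
      simpa using this
  obtain ⟨zpt, hz⟩ := hcomplete u hcauchy
  have hzc : ∀ i, Tendsto (fun n => Δ (u n) zpt i) atTop (𝓝 0) := by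
    intro i
    have := tendsto_pi_nhds.1 hz i
    simpa using this
  -- fixed point
  have hfix : T zpt = zpt := by
    apply (hreflsuf _ _).1
    funext i
    refine le_antisymm ?_ (hpos _ _ i)
    set F : ℕ → ℝ := fun n => (∑ j, A i j * Δ (u n) zpt j) + Δ (u (n+1)) zpt i with hF
    have hFt : Tendsto F atTop (𝓝 ((∑ j : Fin q, A i j * 0) + 0)) := by
      apply Tendsto.add
      · exact tendsto_finset_sum _ fun j _ => (hzc j).const_mul (A i j)
      · exact (hzc i).comp (tendsto_add_atTop_nat 1)
    simp only [mul_zero, Finset.sum_const_zero, add_zero] at hFt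
    apply ge_of_tendsto' hFt
    intro n
    calc Δ (T zpt) zpt i ≤ Δ (T zpt) (u (n+1)) i + Δ (u (n+1)) zpt i := htri _ _ _ i
      _ ≤ (∑ j, A i j * Δ (u n) zpt j) + Δ (u (n+1)) zpt i := by
          apply add_le_add_left
          have h1 : u (n+1) = T (u n) := Function.iterate_succ_apply' T n x0
          rw [h1]
          calc Δ (T zpt) (T (u n)) i ≤ A.mulVec (Δ zpt (u n)) i := hcontr zpt (u n) i
            _ = ∑ j, A i j * Δ (u n) zpt j := by
                simp only [Matrix.mulVec, dotProduct, hsym zpt (u n)]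
  refine ⟨zpt, hfix, ?_, ?_⟩
  · intro w hw
    have h1 : d w zpt ≤ r * d w zpt := by
      calc d w zpt = d (T w) (T zpt) := by rw [hw, hfix]
        _ ≤ r * d w zpt := hdT w zpt
    have h2 : d w zpt = 0 := by nlinarith [hd0 w zpt]
    apply (hreflsuf w zpt).1
    funext i
    refine le_antisymm ?_ (hpos _ _ i)
    have := hle_d w zpt i
    rw [h2] at this
    simpa using this
  · intro x
    rw [tendsto_pi_nhds]
    intro i
    simp only [Pi.zero_apply]
    apply squeeze_zero (fun n => hpos _ _ i)
      (g := fun n => r ^ n * (d x zpt * z0 i))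
    · intro n
      have hzfix : T^[n] zpt = zpt := Function.iterate_fixed hfix n
      calc Δ (T^[n] x) zpt i ≤ d (T^[n] x) zpt * z0 i := hle_d _ _ i
        _ = d (T^[n] x) (T^[n] zpt) * z0 i := by rw [hzfix]
        _ ≤ (r ^ n * d x zpt) * z0 i :=
            mul_le_mul_of_nonneg_right (hiter x zpt n) (hz0 i).le
        _ = r ^ n * (d x zpt * z0 i) := by ring
    · simpa using hrpow.mul_const (d x zpt * z0 i)
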